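/- The number of D_0-decorated cliques of size n that are nesting-free equals the Catalan number C_{n+1}; the values for n = 2, 3, 4, 5 are 5, 14, 42, 132. -/

import Mathlib

abbrev Arc (n : ℕ) : Type := {p : Fin (n+1) × Fin (n+1) // p.1 < p.2}

def isBase {n : ℕ} (a : Arc n) : Prop := a.val.1.val = 0 ∧ a.val.2.val = n

def isEdge {n : ℕ} (a : Arc n) : Prop := a.val.2.val = a.val.1.val + 1 ∧ ¬ isBase a

def isDiagonal {n : ℕ} (a : Arc n) : Prop := ¬ isEdge a ∧ ¬ isBase a

abbrev MClique (M : Type) (n : ℕ) : Type := Arc n → M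

abbrev D0Clique (n : ℕ) : Type := Arc n → Bool

/-- Nesting-free: whenever a solid arc `(x', y')` is nested in a solid arc `(x, y)`
(that is `x ≤ x' < y' ≤ y`), the two arcs coincide. -/
def NestingFree {n : ℕ} (p : D0Clique n) : Prop :=
  ∀ a b : Arc n, p a = true → p b = true →
    a.val.1 ≤ b.val.1 → b.val.2 ≤ a.val.2 → a = b


open DyckStep List

/-- number of `true`s of `f` below `t` -/
def cnt (f : ℕ → Bool) (t : ℕ) : ℕ := (List.range t).countP (fun s => f s)

lemma cnt_zero (f : ℕ → Bool) : cnt f 0 = 0 := rfl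

lemma cnt_succ (f : ℕ → Bool) (t : ℕ) :
    cnt f (t+1) = cnt f t + (if f t then 1 else 0) := by
  simp [cnt, List.range_succ, List.countP_append, List.countP_cons]

lemma cnt_mono (f : ℕ → Bool) : Monotone (cnt f) := by
  intro a b hab
  induction b with
  | zero => simp_all
  | succ b ih =>
    rcases Nat.lt_or_ge a (b+1) with h | h
    · have := ih (by omega)
      rw [cnt_succ]; omega
    · have : a = b + 1 := by omega
      subst this; rfl

lemma cnt_le (f : ℕ → Bool) (t : ℕ) : cnt f t ≤ t := by
  induction t with
  | zero => simp [cnt_zero]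
  | succ t ih => rw [cnt_succ]; split <;> omega

lemma cnt_congr {f g : ℕ → Bool} (t : ℕ) (h : ∀ s < t, f s = g s) : cnt f t = cnt g t := by
  induction t with
  | zero => rfl
  | succ t ih =>
    rw [cnt_succ, cnt_succ, ih (fun s hs => h s (by omega)), h t (by omega)]

lemma cnt_inj {f : ℕ → Bool} {s t : ℕ} (hs : f s = true) (ht : f t = true)
    (hst : s ≤ t) (h : cnt f (s+1) = cnt f (t+1)) : s = t := by
  by_contra hne
  have h1 : s + 1 ≤ t := by omega
  have h2 : cnt f (s+1) ≤ cnt f t := cnt_mono f h1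
  have h3 : cnt f (t+1) = cnt f t + 1 := by rw [cnt_succ, ht]; simp
  omega

/-- least index reaching count `r` -/
lemma cnt_find {f : ℕ → Bool} {m r : ℕ} (hr : 1 ≤ r) (hm : r ≤ cnt f m) :
    ∃ j < m, f j = true ∧ cnt f (j+1) = r ∧ ∀ t, cnt f (t+1) < r → t < j := by
  have hm1 : 1 ≤ m := by
    by_contra h
    have : m = 0 := by omega
    rw [this, cnt_zero] at hm; omega
  have hP : ∃ j, r ≤ cnt f (j+1) := ⟨m - 1, by
    have : m - 1 + 1 = m := by omega
    rw [this]; exact hm⟩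
  classical
  refine ⟨Nat.find hP, ?_, ?_, ?_, ?_⟩
  · have := Nat.find_min' hP (show r ≤ cnt f ((m-1)+1) by rw [show m - 1 + 1 = m by omega]; exact hm)
    omega
  · by_contra h
    simp only [Bool.not_eq_true] at h
    have h2 := cnt_succ f (Nat.find hP)
    rw [h] at h2; simp at h2
    have h1 := Nat.find_spec hP
    rcases Nat.eq_zero_or_pos (Nat.find hP) with hz | hpos
    · rw [hz] at h2 h1; rw [cnt_zero] at h2; omega
    · have := Nat.find_min hP (show Nat.find hP - 1 < Nat.find hP by omega)
      rw [show Nat.find hP - 1 + 1 = Nat.find hP by omega] at this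
      omega
  · have h1 := Nat.find_spec hP
    have h2 := cnt_succ f (Nat.find hP)
    rcases Nat.eq_zero_or_pos (Nat.find hP) with hz | hpos
    · rw [hz] at h1 ⊢
      simp only [Nat.zero_add] at h1 ⊢
      have := cnt_le f 1; omega
    · have h3 := Nat.find_min hP (show Nat.find hP - 1 < Nat.find hP by omega)
      rw [show Nat.find hP - 1 + 1 = Nat.find hP by omega] at h3
      split at h2 <;> omega
  · intro t ht
    by_contra h
    have h1 := Nat.find_spec hP
    have := cnt_mono f (show Nat.find hP + 1 ≤ t + 1 by omega)
    omega

/-- the interleaved word: at each point `t`, a closing slot then an opening slot -/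
def W (X Y : ℕ → Bool) : ℕ → List DyckStep
  | 0 => []
  | t+1 => W X Y t ++ [if Y t then D else U, if X t then U else D]

lemma W_length (X Y : ℕ → Bool) (t : ℕ) : (W X Y t).length = 2 * t := by
  induction t with
  | zero => rfl
  | succ t ih => simp [W, ih]; omega

lemma cnt_succ' (f : ℕ → Bool) (t : ℕ) :
    cnt f (t+1) = cnt f t + (if f t then 1 else 0) := by
  simp [cnt, List.range_succ, List.countP_append, List.countP_cons]

lemma W_countU (X Y : ℕ → Bool) (t : ℕ) :
    (W X Y t).count U + cnt Y t = t + cnt X t := by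
  induction t with
  | zero => rfl
  | succ t ih =>
    rw [W, List.count_append, cnt_succ' X, cnt_succ' Y]
    rcases Bool.dichotomy (X t) with hx | hx <;> rcases Bool.dichotomy (Y t) with hy | hy <;>
      simp [hx, hy, List.count_cons, List.count_singleton] <;> omega

lemma W_countD (X Y : ℕ → Bool) (t : ℕ) :
    (W X Y t).count D + cnt X t = t + cnt Y t := by
  induction t with
  | zero => rfl
  | succ t ih =>
    rw [W, List.count_append, cnt_succ' X, cnt_succ' Y]
    rcases Bool.dichotomy (X t) with hx | hx <;> rcases Bool.dichotomy (Y t) with hy | hy <;>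
      simp [hx, hy, List.count_cons, List.count_singleton] <;> omega

lemma W_prefix (X Y : ℕ → Bool) {t m : ℕ} (h : t ≤ m) :
    ∃ s, W X Y m = W X Y t ++ s := by
  induction m with
  | zero => exact ⟨[], by simp [show t = 0 by omega]⟩
  | succ m ih =>
    rcases Nat.lt_or_ge t (m+1) with h1 | h1
    · obtain ⟨s, hs⟩ := ih (by omega)
      exact ⟨s ++ [if Y m then D else U, if X m then U else D], by rw [W, hs, List.append_assoc]⟩
    · exact ⟨[], by simp [show t = m + 1 by omega]⟩

lemma W_take_even (X Y : ℕ → Bool) {t m : ℕ} (h : t ≤ m) :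
    (W X Y m).take (2*t) = W X Y t := by
  obtain ⟨s, hs⟩ := W_prefix X Y h
  rw [hs, List.take_append, W_length,
    List.take_of_length_le (by rw [W_length]), Nat.sub_self, List.take_zero, List.append_nil]

lemma W_take_odd (X Y : ℕ → Bool) {t m : ℕ} (h : t < m) :
    (W X Y m).take (2*t+1) = W X Y t ++ [if Y t then D else U] := by
  obtain ⟨s, hs⟩ := W_prefix X Y (show t + 1 ≤ m by omega)
  rw [hs, W, List.append_assoc, List.take_append, W_length,
    List.take_of_length_le (by rw [W_length]; omega), show 2*t+1 - 2*t = 1 by omega]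
  rfl

lemma W_getD_even (X Y : ℕ → Bool) {t m : ℕ} (h : t < m) (d : DyckStep) :
    (W X Y m).getD (2*t) d = if Y t then D else U := by
  obtain ⟨s, hs⟩ := W_prefix X Y (show t + 1 ≤ m by omega)
  rw [hs, List.getD_append _ _ _ _ (by rw [W_length]; omega), W,
    List.getD_append_right _ _ _ _ (by simp [W_length])]
  all_goals simp [W_length]

lemma W_getD_odd (X Y : ℕ → Bool) {t m : ℕ} (h : t < m) (d : DyckStep) :
    (W X Y m).getD (2*t+1) d = if X t then U else D := by
  obtain ⟨s, hs⟩ := W_prefix X Y (show t + 1 ≤ m by omega)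
  rw [hs, List.getD_append _ _ _ _ (by rw [W_length]; omega), W,
    List.getD_append_right _ _ _ _ (by rw [W_length]; omega)]
  all_goals simp [W_length, show 2*t+1 - 2*t = 1 by omega]

lemma W_congr {X Y X' Y' : ℕ → Bool} (m : ℕ)
    (hX : ∀ s < m, X s = X' s) (hY : ∀ s < m, Y s = Y' s) :
    W X Y m = W X' Y' m := by
  induction m with
  | zero => rfl
  | succ m ih =>
    rw [W, W, ih (fun s hs => hX s (by omega)) (fun s hs => hY s (by omega)),
      hX m (by omega), hY m (by omega)]

lemma cnt_mono' (f : ℕ → Bool) {a b : ℕ} (h : a ≤ b) : cnt f a ≤ cnt f b := by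
  induction b with
  | zero => simp_all [cnt]
  | succ b ih =>
    rcases Nat.lt_or_ge a (b+1) with h1 | h1
    · have := ih (by omega)
      rw [cnt_succ']; split <;> omega
    · have : a = b + 1 := by omega
      subst this; rfl

lemma W_dyck_prefix {X Y : ℕ → Bool} {m : ℕ}
    (hC2 : ∀ t < m, cnt Y (t+1) ≤ cnt X t) (i : ℕ) :
    ((W X Y m).take i).count D ≤ ((W X Y m).take i).count U := by
  induction m generalizing i with
  | zero => simp [W]
  | succ m ih =>
    have hu := W_countU X Y m
    have hd := W_countD X Y m
    have hu1 := W_countU X Y (m+1)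
    have hd1 := W_countD X Y (m+1)
    have hxs := cnt_succ' X m
    have hys := cnt_succ' Y m
    have hC2m := hC2 m (by omega)
    rcases Nat.lt_or_ge i (2*m+1) with h1 | h1
    · have : (W X Y (m+1)).take i = (W X Y m).take i := by
        rw [W, List.take_append, W_length,
          show i - 2*m = 0 by omega, List.take_zero, List.append_nil]
      rw [this]
      exact ih (fun t ht => hC2 t (by omega)) i
    rcases Nat.lt_or_ge i (2*m+2) with h2 | h2
    · have : i = 2*m+1 := by omega
      subst this
      rw [W_take_odd X Y (by omega)]
      rcases Bool.dichotomy (Y m) with hy | hy <;>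
        simp [hy, List.count_append] at hys ⊢ <;> omega
    · rw [List.take_of_length_le (by rw [W_length]; omega)]
      omega

lemma W_dyck_C2 {X Y : ℕ → Bool} {m t : ℕ} (h : t < m)
    (hd : ((W X Y m).take (2*t+1)).count D ≤ ((W X Y m).take (2*t+1)).count U) :
    cnt Y (t+1) ≤ cnt X t := by
  rw [W_take_odd X Y h] at hd
  have hu := W_countU X Y t
  have hdd := W_countD X Y t
  have hys := cnt_succ' Y t
  rcases Bool.dichotomy (Y t) with hy | hy <;>
    simp [hy, List.count_append] at hd hys <;> omega

lemma W_dyck_C1 {X Y : ℕ → Bool} {m : ℕ}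
    (h : (W X Y m).count U = (W X Y m).count D) : cnt X m = cnt Y m := by
  have hu := W_countU X Y m
  have hd := W_countD X Y m
  omega

lemma W_semilength {X Y : ℕ → Bool} {m : ℕ} (h : cnt X m = cnt Y m) :
    (W X Y m).count U = m := by
  have hu := W_countU X Y m
  omega

def Xf (w : List DyckStep) (t : ℕ) : Bool := decide (w.getD (2*t+1) D = U)
def Yf (w : List DyckStep) (t : ℕ) : Bool := decide (w.getD (2*t) U = D)

lemma W_reconstruct {w : List DyckStep} {m : ℕ} (hw : w.length = 2*m) :
    W (Xf w) (Yf w) m = w := by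
  suffices h : ∀ k, k ≤ m → W (Xf w) (Yf w) k = w.take (2*k) by
    have := h m le_rfl
    rwa [List.take_of_length_le (by omega)] at this
  intro k
  induction k with
  | zero => simp [W]
  | succ k ih =>
    intro hk
    have h1 : 2*k+1 < w.length := by omega
    have h0 : 2*k < w.length := by omega
    rw [W, ih (by omega), show 2*(k+1) = (2*k+1)+1 by ring, List.take_succ, List.take_succ]
    rw [List.getElem?_eq_getElem h1, List.getElem?_eq_getElem h0]
    have ha : (if Yf w k then D else U) = w[2*k] := by
      rcases DyckStep.dichotomy (w[2*k]) with hv | hv <;>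
        simp [Yf, List.getD_eq_getElem?_getD, List.getElem?_eq_getElem h0, hv]
    have hb : (if Xf w k then U else D) = w[2*k+1] := by
      rcases DyckStep.dichotomy (w[2*k+1]) with hv | hv <;>
        simp [Xf, List.getD_eq_getElem?_getD, List.getElem?_eq_getElem h1, hv]
    simp only [Option.toList_some, List.append_assoc, List.singleton_append, ha, hb]

section CliqueLayer

variable {n : ℕ}

/-- the Finset of solid arcs -/
def Ap (p : D0Clique n) : Finset (Arc n) := Finset.univ.filter (fun a => p a = true)

lemma mem_Ap {p : D0Clique n} {a : Arc n} : a ∈ Ap p ↔ p a = true := by simp [Ap]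

/-- left endpoints indicator -/
def Xc (p : D0Clique n) (t : ℕ) : Bool := decide (∃ a : Arc n, p a = true ∧ a.val.1.val = t)
/-- right endpoints indicator -/
def Yc (p : D0Clique n) (t : ℕ) : Bool := decide (∃ a : Arc n, p a = true ∧ a.val.2.val = t)

lemma uniqX {p : D0Clique n} (hp : NestingFree p) {a b : Arc n}
    (ha : p a = true) (hb : p b = true) (h : a.val.1 = b.val.1) : a = b := by
  rcases le_total a.val.2 b.val.2 with h2 | h2
  · exact (hp b a hb ha h.ge h2).symm
  · exact hp a b ha hb h.le h2

lemma uniqY {p : D0Clique n} (hp : NestingFree p) {a b : Arc n}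
    (ha : p a = true) (hb : p b = true) (h : a.val.2 = b.val.2) : a = b := by
  rcases le_total a.val.1 b.val.1 with h1 | h1
  · exact hp a b ha hb h1 h.ge
  · exact (hp b a hb ha h1 h.le).symm

lemma ordY {p : D0Clique n} (hp : NestingFree p) {a b : Arc n}
    (ha : p a = true) (hb : p b = true) (h : a.val.1 ≤ b.val.1) :
    a.val.2 ≤ b.val.2 := by
  by_contra hlt
  push_neg at hlt
  have heq := hp a b ha hb h hlt.le
  rw [heq] at hlt
  exact lt_irrefl _ hlt

lemma ordX {p : D0Clique n} (hp : NestingFree p) {a b : Arc n}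
    (ha : p a = true) (hb : p b = true) (h : a.val.2 ≤ b.val.2) :
    a.val.1 ≤ b.val.1 := by
  by_contra hlt
  push_neg at hlt
  have heq := hp b a hb ha hlt.le h
  rw [heq] at hlt
  exact lt_irrefl _ hlt

lemma cntX_card {p : D0Clique n} (hp : NestingFree p) (t : ℕ) :
    cnt (Xc p) t = ((Ap p).filter (fun a => a.val.1.val < t)).card := by
  induction t with
  | zero => simp [cnt]
  | succ t ih =>
    have hsplit : (Ap p).filter (fun a => a.val.1.val < t+1) =
        (Ap p).filter (fun a => a.val.1.val < t) ∪ (Ap p).filter (fun a => a.val.1.val = t) := by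
      ext b
      simp only [Finset.mem_filter, Finset.mem_union]
      constructor
      · rintro ⟨hb, hbt⟩
        rcases Nat.lt_or_ge b.val.1.val t with h | h
        · exact Or.inl ⟨hb, h⟩
        · exact Or.inr ⟨hb, by omega⟩
      · rintro (⟨hb, hbt⟩ | ⟨hb, hbt⟩) <;> exact ⟨hb, by omega⟩
    have hdisj : Disjoint ((Ap p).filter (fun a => a.val.1.val < t))
        ((Ap p).filter (fun a => a.val.1.val = t)) := by
      rw [Finset.disjoint_left]
      intro b hb1 hb2
      simp only [Finset.mem_filter] at hb1 hb2
      omega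
    have hone : ((Ap p).filter (fun a => a.val.1.val = t)).card
        = if Xc p t then 1 else 0 := by
      rcases Bool.dichotomy (Xc p t) with hx | hx
      · have hnex : ¬ ∃ a : Arc n, p a = true ∧ a.val.1.val = t := by
          simpa [Xc] using hx
        rw [hx, if_neg (by simp)]
        rw [Finset.card_eq_zero, Finset.filter_eq_empty_iff]
        intro b hb hbt
        exact hnex ⟨b, mem_Ap.mp hb, hbt⟩
      · have hex : ∃ a : Arc n, p a = true ∧ a.val.1.val = t := by
          simpa [Xc] using hx
        obtain ⟨a, ha, hat⟩ := hex
        have hsing : (Ap p).filter (fun a => a.val.1.val = t) = {a} := by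
          ext b
          simp only [Finset.mem_filter, Finset.mem_singleton, mem_Ap]
          constructor
          · rintro ⟨hb, hbt⟩
            exact uniqX hp hb ha (Fin.ext (by omega))
          · rintro rfl
            exact ⟨ha, hat⟩
        rw [hx, if_pos rfl, hsing, Finset.card_singleton]
    rw [cnt_succ, ih, hsplit, Finset.card_union_of_disjoint hdisj, hone]

lemma cntY_card {p : D0Clique n} (hp : NestingFree p) (t : ℕ) :
    cnt (Yc p) t = ((Ap p).filter (fun a => a.val.2.val < t)).card := by
  induction t with
  | zero => simp [cnt]
  | succ t ih =>
    have hsplit : (Ap p).filter (fun a => a.val.2.val < t+1) =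
        (Ap p).filter (fun a => a.val.2.val < t) ∪ (Ap p).filter (fun a => a.val.2.val = t) := by
      ext b
      simp only [Finset.mem_filter, Finset.mem_union]
      constructor
      · rintro ⟨hb, hbt⟩
        rcases Nat.lt_or_ge b.val.2.val t with h | h
        · exact Or.inl ⟨hb, h⟩
        · exact Or.inr ⟨hb, by omega⟩
      · rintro (⟨hb, hbt⟩ | ⟨hb, hbt⟩) <;> exact ⟨hb, by omega⟩
    have hdisj : Disjoint ((Ap p).filter (fun a => a.val.2.val < t))
        ((Ap p).filter (fun a => a.val.2.val = t)) := by
      rw [Finset.disjoint_left]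
      intro b hb1 hb2
      simp only [Finset.mem_filter] at hb1 hb2
      omega
    have hone : ((Ap p).filter (fun a => a.val.2.val = t)).card
        = if Yc p t then 1 else 0 := by
      rcases Bool.dichotomy (Yc p t) with hy | hy
      · have hnex : ¬ ∃ a : Arc n, p a = true ∧ a.val.2.val = t := by
          simpa [Yc] using hy
        rw [hy, if_neg (by simp)]
        rw [Finset.card_eq_zero, Finset.filter_eq_empty_iff]
        intro b hb hbt
        exact hnex ⟨b, mem_Ap.mp hb, hbt⟩
      · have hex : ∃ a : Arc n, p a = true ∧ a.val.2.val = t := by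
          simpa [Yc] using hy
        obtain ⟨a, ha, hat⟩ := hex
        have hsing : (Ap p).filter (fun a => a.val.2.val = t) = {a} := by
          ext b
          simp only [Finset.mem_filter, Finset.mem_singleton, mem_Ap]
          constructor
          · rintro ⟨hb, hbt⟩
            exact uniqY hp hb ha (Fin.ext (by omega))
          · rintro rfl
            exact ⟨ha, hat⟩
        rw [hy, if_pos rfl, hsing, Finset.card_singleton]
    rw [cnt_succ, ih, hsplit, Finset.card_union_of_disjoint hdisj, hone]

lemma C1c {p : D0Clique n} (hp : NestingFree p) :
    cnt (Xc p) (n+1) = cnt (Yc p) (n+1) := by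
  rw [cntX_card hp, cntY_card hp,
    Finset.filter_true_of_mem (fun a _ => a.val.1.isLt),
    Finset.filter_true_of_mem (fun a _ => a.val.2.isLt)]

lemma C2c {p : D0Clique n} (hp : NestingFree p) (t : ℕ) :
    cnt (Yc p) (t+1) ≤ cnt (Xc p) t := by
  rw [cntX_card hp, cntY_card hp]
  apply Finset.card_le_card
  intro a ha
  simp only [Finset.mem_filter] at ha ⊢
  have hxy : a.val.1 < a.val.2 := a.prop
  rw [Fin.lt_def] at hxy
  exact ⟨ha.1, by omega⟩

/-- build a clique from endpoint indicators by rank-matching -/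
def Pc (n : ℕ) (X Y : ℕ → Bool) : D0Clique n := fun a =>
  X a.val.1.val && Y a.val.2.val && decide (cnt X (a.val.1.val+1) = cnt Y (a.val.2.val+1))

lemma Pc_eq_true {X Y : ℕ → Bool} {a : Arc n} : Pc n X Y a = true ↔
    X a.val.1.val = true ∧ Y a.val.2.val = true ∧
      cnt X (a.val.1.val+1) = cnt Y (a.val.2.val+1) := by
  simp [Pc, Bool.and_eq_true, and_assoc]

lemma NF_Pc (X Y : ℕ → Bool) : NestingFree (Pc n X Y) := by
  intro a b ha hb h1 h2
  rw [Pc_eq_true] at ha hb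
  obtain ⟨hxa, hya, hca⟩ := ha
  obtain ⟨hxb, hyb, hcb⟩ := hb
  rw [Fin.le_def] at h1 h2
  have m1 : cnt X (a.val.1.val+1) ≤ cnt X (b.val.1.val+1) := cnt_mono X (by omega)
  have m2 : cnt Y (b.val.2.val+1) ≤ cnt Y (a.val.2.val+1) := cnt_mono Y (by omega)
  have e1 : cnt X (a.val.1.val+1) = cnt X (b.val.1.val+1) := by omega
  have e2 : cnt Y (b.val.2.val+1) = cnt Y (a.val.2.val+1) := by omega
  have hx := cnt_inj hxa hxb h1 e1
  have hy := cnt_inj hyb hya h2 e2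
  apply Subtype.ext
  apply Prod.ext <;> apply Fin.ext <;> omega

lemma key1 {p : D0Clique n} (hp : NestingFree p) {a : Arc n} (ha : p a = true) :
    cnt (Xc p) (a.val.1.val+1) = cnt (Yc p) (a.val.2.val+1) := by
  rw [cntX_card hp, cntY_card hp]
  congr 1
  ext b
  simp only [Finset.mem_filter, mem_Ap]
  constructor
  · rintro ⟨hb, hble⟩
    refine ⟨hb, ?_⟩
    have h := ordY hp hb ha (by rw [Fin.le_def]; omega)
    rw [Fin.le_def] at h
    omega
  · rintro ⟨hb, hble⟩
    refine ⟨hb, ?_⟩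
    have h := ordX hp hb ha (by rw [Fin.le_def]; omega)
    rw [Fin.le_def] at h
    omega

lemma key2 {p : D0Clique n} (hp : NestingFree p) {a : Arc n}
    (hX : Xc p a.val.1.val = true) (hY : Yc p a.val.2.val = true)
    (hc : cnt (Xc p) (a.val.1.val+1) = cnt (Yc p) (a.val.2.val+1)) :
    p a = true := by
  have hex : ∃ c : Arc n, p c = true ∧ c.val.1.val = a.val.1.val := by simpa [Xc] using hX
  have hey : ∃ d : Arc n, p d = true ∧ d.val.2.val = a.val.2.val := by simpa [Yc] using hY
  obtain ⟨c, hc1, hc2⟩ := hex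
  obtain ⟨d, hd1, hd2⟩ := hey
  rw [cntX_card hp, cntY_card hp] at hc
  have hcd : c = d := by
    by_contra hne
    rcases lt_trichotomy c.val.1.val d.val.1.val with hlt | heq | hgt
    · have hyy : c.val.2.val < d.val.2.val := by
        have hle := ordY hp hc1 hd1 (by rw [Fin.le_def]; omega)
        rw [Fin.le_def] at hle
        rcases Nat.lt_or_ge c.val.2.val d.val.2.val with h | h
        · exact h
        · exact absurd (uniqY hp hc1 hd1 (Fin.ext (by omega))) hne
      have hsub : (Ap p).filter (fun b => b.val.1.val < a.val.1.val+1) ⊆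
          (Ap p).filter (fun b => b.val.2.val < a.val.2.val+1) := by
        intro b hb
        simp only [Finset.mem_filter, mem_Ap] at hb ⊢
        refine ⟨hb.1, ?_⟩
        have h := ordY hp hb.1 hc1 (by rw [Fin.le_def]; omega)
        rw [Fin.le_def] at h
        omega
      have hdT : d ∈ (Ap p).filter (fun b => b.val.2.val < a.val.2.val+1) := by
        simp only [Finset.mem_filter, mem_Ap]
        exact ⟨hd1, by omega⟩
      have hdS : d ∉ (Ap p).filter (fun b => b.val.1.val < a.val.1.val+1) := by
        simp only [Finset.mem_filter, mem_Ap]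
        rintro ⟨-, hlt2⟩
        omega
      have := Finset.card_lt_card ((Finset.ssubset_iff_of_subset hsub).mpr ⟨d, hdT, hdS⟩)
      omega
    · exact absurd (uniqX hp hc1 hd1 (Fin.ext (by omega))) hne
    · have hyy : d.val.2.val < c.val.2.val := by
        have hle := ordY hp hd1 hc1 (by rw [Fin.le_def]; omega)
        rw [Fin.le_def] at hle
        rcases Nat.lt_or_ge d.val.2.val c.val.2.val with h | h
        · exact h
        · exact absurd (uniqY hp hc1 hd1 (Fin.ext (by omega))) hne
      have hsub : (Ap p).filter (fun b => b.val.2.val < a.val.2.val+1) ⊆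
          (Ap p).filter (fun b => b.val.1.val < a.val.1.val+1) := by
        intro b hb
        simp only [Finset.mem_filter, mem_Ap] at hb ⊢
        refine ⟨hb.1, ?_⟩
        have h := ordX hp hb.1 hd1 (by rw [Fin.le_def]; omega)
        rw [Fin.le_def] at h
        omega
      have hdT : c ∈ (Ap p).filter (fun b => b.val.1.val < a.val.1.val+1) := by
        simp only [Finset.mem_filter, mem_Ap]
        exact ⟨hc1, by omega⟩
      have hdS : c ∉ (Ap p).filter (fun b => b.val.2.val < a.val.2.val+1) := by
        simp only [Finset.mem_filter, mem_Ap]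
        rintro ⟨-, hlt2⟩
        omega
      have := Finset.card_lt_card ((Finset.ssubset_iff_of_subset hsub).mpr ⟨c, hdT, hdS⟩)
      omega
  have hac : a = c := by
    apply Subtype.ext
    apply Prod.ext <;> apply Fin.ext
    · omega
    · rw [hcd]; omega
  rw [hac]
  exact hc1

lemma Pc_round {p : D0Clique n} (hp : NestingFree p) : Pc n (Xc p) (Yc p) = p := by
  funext a
  have hiff : Pc n (Xc p) (Yc p) a = true ↔ p a = true := by
    constructor
    · intro h
      rw [Pc_eq_true] at h
      exact key2 hp h.1 h.2.1 h.2.2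
    · intro h
      rw [Pc_eq_true]
      refine ⟨?_, ?_, key1 hp h⟩
      · simp only [Xc, decide_eq_true_eq]
        exact ⟨a, h, rfl⟩
      · simp only [Yc, decide_eq_true_eq]
        exact ⟨a, h, rfl⟩
  rcases Bool.dichotomy (p a) with h | h <;>
    rcases Bool.dichotomy (Pc n (Xc p) (Yc p) a) with h2 | h2 <;> simp_all

lemma Xc_Pc {X Y : ℕ → Bool} {t : ℕ} (ht : t ≤ n)
    (hC1 : cnt X (n+1) = cnt Y (n+1)) (hC2t : cnt Y (t+1) ≤ cnt X t) :
    Xc (Pc n X Y) t = X t := by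
  rcases Bool.dichotomy (X t) with hx | hx
  · rw [hx]
    simp only [Xc, decide_eq_false_iff_not]
    rintro ⟨a, ha, hat⟩
    rw [Pc_eq_true] at ha
    rw [hat, hx] at ha
    exact Bool.false_ne_true ha.1
  · rw [hx]
    have hxs := cnt_succ X t
    rw [hx] at hxs
    have hr1 : 1 ≤ cnt X (t+1) := by rw [hxs]; simp
    have hm : cnt X (t+1) ≤ cnt Y (n+1) := hC1 ▸ cnt_mono X (by omega)
    obtain ⟨j, hjn, hYj, hcnt, hleast⟩ := cnt_find hr1 hm
    have htj : t < j := hleast t (by simp at hxs; omega)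
    simp only [Xc, decide_eq_true_eq]
    refine ⟨⟨(⟨t, by omega⟩, ⟨j, by omega⟩), by rw [Fin.lt_def]; exact htj⟩, ?_, rfl⟩
    rw [Pc_eq_true]
    exact ⟨hx, hYj, hcnt.symm⟩

lemma Yc_Pc {X Y : ℕ → Bool} {t : ℕ} (ht : t ≤ n)
    (hC2t : cnt Y (t+1) ≤ cnt X t) :
    Yc (Pc n X Y) t = Y t := by
  rcases Bool.dichotomy (Y t) with hy | hy
  · rw [hy]
    simp only [Yc, decide_eq_false_iff_not]
    rintro ⟨a, ha, hat⟩
    rw [Pc_eq_true] at ha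
    rw [hat, hy] at ha
    exact Bool.false_ne_true ha.2.1
  · rw [hy]
    have hys := cnt_succ Y t
    rw [hy] at hys
    have hr1 : 1 ≤ cnt Y (t+1) := by rw [hys]; simp
    have hm : cnt Y (t+1) ≤ cnt X t := hC2t
    obtain ⟨i, hit, hXi, hcnt, hleast⟩ := cnt_find hr1 hm
    simp only [Yc, decide_eq_true_eq]
    refine ⟨⟨(⟨i, by omega⟩, ⟨t, by omega⟩), by rw [Fin.lt_def]; exact hit⟩, ?_, rfl⟩
    rw [Pc_eq_true]
    exact ⟨hXi, hy, hcnt⟩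

lemma Pc_congr {X Y X' Y' : ℕ → Bool} (hX : ∀ s ≤ n, X s = X' s) (hY : ∀ s ≤ n, Y s = Y' s) :
    Pc n X Y = Pc n X' Y' := by
  funext a
  have h1 : a.val.1.val ≤ n := by have := a.val.1.isLt; omega
  have h2 : a.val.2.val ≤ n := by have := a.val.2.isLt; omega
  show (X a.val.1.val && Y a.val.2.val && _) = (X' a.val.1.val && Y' a.val.2.val && _)
  rw [hX _ h1, hY _ h2,
    cnt_congr _ (fun s hs => hX s (by omega)),
    cnt_congr _ (fun s hs => hY s (by omega))]

/-- The bijection between nesting-free cliques and Dyck words of semilength `n+1`. -/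
def cliqueEquiv (n : ℕ) :
    {p : D0Clique n // NestingFree p} ≃ {w : DyckWord // w.semilength = n+1} where
  toFun := fun ⟨p, hp⟩ =>
    ⟨⟨W (Xc p) (Yc p) (n+1),
      by
        have hu := W_countU (Xc p) (Yc p) (n+1)
        have hd := W_countD (Xc p) (Yc p) (n+1)
        have h1 := C1c hp
        omega,
      fun i => W_dyck_prefix (fun t _ => C2c hp t) i⟩,
      W_semilength (C1c hp)⟩
  invFun := fun ⟨w, hw⟩ => ⟨Pc n (Xf w.toList) (Yf w.toList), NF_Pc _ _⟩
  left_inv := fun ⟨p, hp⟩ => by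
    apply Subtype.ext
    show Pc n (Xf (W (Xc p) (Yc p) (n+1))) (Yf (W (Xc p) (Yc p) (n+1))) = p
    have hlX : ∀ s ≤ n, Xf (W (Xc p) (Yc p) (n+1)) s = Xc p s := by
      intro s hs
      unfold Xf
      rw [W_getD_odd _ _ (show s < n+1 by omega)]
      rcases Bool.dichotomy (Xc p s) with h | h <;> simp [h]
    have hlY : ∀ s ≤ n, Yf (W (Xc p) (Yc p) (n+1)) s = Yc p s := by
      intro s hs
      unfold Yf
      rw [W_getD_even _ _ (show s < n+1 by omega)]
      rcases Bool.dichotomy (Yc p s) with h | h <;> simp [h]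
    rw [Pc_congr hlX hlY, Pc_round hp]
  right_inv := fun ⟨w, hw⟩ => by
    apply Subtype.ext
    apply DyckWord.ext
    show W (Xc (Pc n (Xf w.toList) (Yf w.toList))) (Yc (Pc n (Xf w.toList) (Yf w.toList))) (n+1)
      = w.toList
    have hlen : w.toList.length = 2*(n+1) := by
      rw [← w.two_mul_semilength_eq_length, hw]
    have hrec := W_reconstruct hlen
    have hC1 : cnt (Xf w.toList) (n+1) = cnt (Yf w.toList) (n+1) :=
      W_dyck_C1 (by rw [hrec]; exact w.count_U_eq_count_D)
    have hC2 : ∀ t < n+1, cnt (Yf w.toList) (t+1) ≤ cnt (Xf w.toList) t := fun t htn =>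
      W_dyck_C2 htn (by rw [hrec]; exact w.count_D_le_count_U (2*t+1))
    rw [W_congr (n+1)
      (fun s hs => Xc_Pc (by omega) hC1 (hC2 s hs))
      (fun s hs => Yc_Pc (by omega) (hC2 s hs)), hrec]

end CliqueLayer

lemma main_count (n : ℕ) :
    Nat.card {p : D0Clique n // NestingFree p} = catalan (n + 1) := by
  rw [Nat.card_congr (cliqueEquiv n), Nat.card_eq_fintype_card,
    DyckWord.card_dyckWord_semilength_eq_catalan]

lemma cat4 : catalan 4 = 14 := by
  rw [catalan_succ]
  norm_num [Fin.sum_univ_succ, catalan_two, catalan_three]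

lemma cat5 : catalan 5 = 42 := by
  rw [catalan_succ]
  norm_num [Fin.sum_univ_succ, cat4, catalan_two, catalan_three]

lemma cat6 : catalan 6 = 132 := by
  rw [catalan_succ]
  norm_num [Fin.sum_univ_succ, cat4, cat5, catalan_two, catalan_three]

/-- The number of nesting-free `D₀`-decorated cliques of size `n` equals the Catalan
number `C_{n+1}`; the values for `n = 2, 3, 4, 5` are `5, 14, 42, 132`. -/
theorem stmt15 :
    (∀ n : ℕ, 1 ≤ n →
      Nat.card {p : D0Clique n // NestingFree p} = catalan (n + 1)) ∧
    Nat.card {p : D0Clique 2 // NestingFree p} = 5 ∧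
    Nat.card {p : D0Clique 3 // NestingFree p} = 14 ∧
    Nat.card {p : D0Clique 4 // NestingFree p} = 42 ∧
    Nat.card {p : D0Clique 5 // NestingFree p} = 132 := by
  refine ⟨fun n _ => main_count n, ?_, ?_, ?_, ?_⟩ <;> rw [main_count]
  · exact catalan_three
  · exact cat4
  · exact cat5
  · exact cat6
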